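/- arXiv:1302.3115 — 4 statements merged into one kernel-verified Lean document; each statement's English description precedes it below -/
import Mathlib

section
/- For every integer n ≥ 2, the n-th derivative of a holomorphic function u satisfying the Riccati equation u' = r(u−a)(u−b) is given by u^(n)(z) = r^n · Σ_{k=0}^{n−1} ⟨n,k⟩ (u−a)^{k+1} (u−b)^{n−k}, where ⟨n,k⟩ are the Eulerian numbers. -/
open scoped BigOperators
open MeasureTheory

/-- Eulerian numbers `⟨n,k⟩`: number of permutations of `{1,…,n}` with `k` ascents,
via the recurrence `⟨n+1,k⟩ = (k+1)⟨n,k⟩ + (n−k+1)⟨n,k−1⟩`. -/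
def eulerian : ℕ → ℕ → ℕ
  | 0, 0 => 1
  | 0, _ + 1 => 0
  | n + 1, 0 => eulerian n 0
  | n + 1, k + 1 => (k + 2) * eulerian n (k + 1) + (n - k) * eulerian n k

lemma eulerian_zero_of_le : ∀ n k : ℕ, 1 ≤ n → n ≤ k → eulerian n k = 0 := by
  intro n
  induction n with
  | zero => intro k h; omega
  | succ m ih =>
    intro k h1 hk
    match k, hk with
    | k + 1, hk =>
      show (k + 2) * eulerian m (k + 1) + (m - k) * eulerian m k = 0
      have h2 : m - k = 0 := by omega
      rcases Nat.eq_zero_or_pos m with hm | hm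
      · subst hm; simp [h2, eulerian]
      · rw [ih (k + 1) hm (by omega), h2]; ring

lemma eulerian_succ_succ (n k : ℕ) :
    eulerian (n + 1) (k + 1) = (k + 2) * eulerian n (k + 1) + (n - k) * eulerian n k := rfl

lemma eulerian_key (a b w : ℂ) (m : ℕ) :
    (∑ k ∈ Finset.range (m + 1), (eulerian (m + 1) k : ℂ) *
        (((k : ℂ) + 1) * (w - a) ^ k * (w - b) ^ (m + 1 - k) +
          ((m + 1 - k : ℕ) : ℂ) * (w - a) ^ (k + 1) * (w - b) ^ (m - k)))
      * ((w - a) * (w - b))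
    = ∑ k ∈ Finset.range (m + 2),
        (eulerian (m + 2) k : ℂ) * (w - a) ^ (k + 1) * (w - b) ^ (m + 2 - k) := by
  rw [Finset.sum_mul]
  have step : ∀ k ∈ Finset.range (m + 1),
      (eulerian (m + 1) k : ℂ) *
        (((k : ℂ) + 1) * (w - a) ^ k * (w - b) ^ (m + 1 - k) +
          ((m + 1 - k : ℕ) : ℂ) * (w - a) ^ (k + 1) * (w - b) ^ (m - k)) * ((w - a) * (w - b))
      = ((k : ℂ) + 1) * (eulerian (m + 1) k : ℂ) * (w - a) ^ (k + 1) * (w - b) ^ (m + 2 - k)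
        + ((m + 1 - k : ℕ) : ℂ) * (eulerian (m + 1) k : ℂ) * (w - a) ^ (k + 2) * (w - b) ^ (m + 1 - k) := by
    intro k hk
    rw [Finset.mem_range] at hk
    have h1 : m + 2 - k = (m + 1 - k) + 1 := by omega
    have h2 : m + 1 - k = (m - k) + 1 := by omega
    rw [h1, h2]
    simp only [pow_succ]
    ring
  rw [Finset.sum_congr rfl step, Finset.sum_add_distrib]
  rw [Finset.sum_range_succ' (fun k => (eulerian (m + 2) k : ℂ) * (w - a) ^ (k + 1) * (w - b) ^ (m + 2 - k))]
  have rhs1 : ∀ k ∈ Finset.range (m + 1),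
      (eulerian (m + 2) (k + 1) : ℂ) * (w - a) ^ (k + 1 + 1) * (w - b) ^ (m + 2 - (k + 1))
      = ((k : ℂ) + 2) * (eulerian (m + 1) (k + 1) : ℂ) * (w - a) ^ (k + 2) * (w - b) ^ (m + 1 - k)
        + ((m + 1 - k : ℕ) : ℂ) * (eulerian (m + 1) k : ℂ) * (w - a) ^ (k + 2) * (w - b) ^ (m + 1 - k) := by
    intro k hk
    rw [Finset.mem_range] at hk
    have he : m + 2 - (k + 1) = m + 1 - k := by omega
    rw [he, eulerian_succ_succ]
    push_cast
    ring
  rw [Finset.sum_congr rfl rhs1, Finset.sum_add_distrib]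
  -- left A sum: peel off k = 0
  rw [Finset.sum_range_succ' (fun k => ((k : ℂ) + 1) * (eulerian (m + 1) k : ℂ) * (w - a) ^ (k + 1) * (w - b) ^ (m + 2 - k))]
  -- right first sum: extend to match, last term vanishes
  rw [Finset.sum_range_succ (fun k => ((k : ℂ) + 2) * (eulerian (m + 1) (k + 1) : ℂ) * (w - a) ^ (k + 2) * (w - b) ^ (m + 1 - k))]
  have hz : (eulerian (m + 1) (m + 1) : ℂ) = 0 := by
    rw [eulerian_zero_of_le (m + 1) (m + 1) (by omega) le_rfl]; norm_num
  have hA : ∀ k ∈ Finset.range m,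
      (((k + 1 : ℕ) : ℂ) + 1) * (eulerian (m + 1) (k + 1) : ℂ) * (w - a) ^ (k + 1 + 1) * (w - b) ^ (m + 2 - (k + 1))
      = ((k : ℂ) + 2) * (eulerian (m + 1) (k + 1) : ℂ) * (w - a) ^ (k + 2) * (w - b) ^ (m + 1 - k) := by
    intro k hk
    rw [Finset.mem_range] at hk
    have he : m + 2 - (k + 1) = m + 1 - k := by omega
    rw [he]; push_cast; ring
  rw [Finset.sum_congr rfl hA, hz]
  have h0 : eulerian (m + 2) 0 = eulerian (m + 1) 0 := rfl
  rw [h0]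
  ring

lemma G_hasDerivAt (a b : ℂ) (m : ℕ) (w : ℂ) :
    HasDerivAt (fun w => ∑ k ∈ Finset.range (m + 1),
        (eulerian (m + 1) k : ℂ) * (w - a) ^ (k + 1) * (w - b) ^ (m + 1 - k))
      (∑ k ∈ Finset.range (m + 1), (eulerian (m + 1) k : ℂ) *
        (((k : ℂ) + 1) * (w - a) ^ k * (w - b) ^ (m + 1 - k) +
          ((m + 1 - k : ℕ) : ℂ) * (w - a) ^ (k + 1) * (w - b) ^ (m - k))) w := by
  apply HasDerivAt.fun_sum
  intro k hk
  rw [Finset.mem_range] at hk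
  have h1 : HasDerivAt (fun w : ℂ => (w - a) ^ (k + 1)) (((k : ℂ) + 1) * (w - a) ^ k) w := by
    have := ((hasDerivAt_id w).sub_const a).fun_pow (k + 1)
    simpa using this
  have h2 : HasDerivAt (fun w : ℂ => (w - b) ^ (m + 1 - k))
      (((m + 1 - k : ℕ) : ℂ) * (w - b) ^ (m - k)) w := by
    have := ((hasDerivAt_id w).sub_const b).fun_pow (m + 1 - k)
    have e : m + 1 - k - 1 = m - k := by omega
    simpa [e] using this
  have h3 := (h1.fun_mul h2).const_mul ((eulerian (m + 1) k : ℂ))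
  have e : (fun y : ℂ => (eulerian (m + 1) k : ℂ) * ((y - a) ^ (k + 1) * (y - b) ^ (m + 1 - k)))
      = fun y => (eulerian (m + 1) k : ℂ) * (y - a) ^ (k + 1) * (y - b) ^ (m + 1 - k) := by
    funext y; ring
  rw [e] at h3
  exact h3.congr_deriv (by ring)

theorem riccati_iterated_deriv
    (D : Set ℂ) (hD : IsOpen D) (r a b : ℂ) (hr : r ≠ 0) (hab : a ≠ b)
    (u : ℂ → ℂ) (hu : ∀ z ∈ D, HasDerivAt u (r * (u z - a) * (u z - b)) z)
    (n : ℕ) (hn : 2 ≤ n) (z : ℂ) (hz : z ∈ D) :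
    iteratedDerivWithin n u D z =
      r ^ n * ∑ k ∈ Finset.range n,
        (eulerian n k : ℂ) * (u z - a) ^ (k + 1) * (u z - b) ^ (n - k) := by
  have hud : UniqueDiffOn ℂ D := hD.uniqueDiffOn
  have main : ∀ m : ℕ, ∀ z ∈ D, iteratedDerivWithin (m + 1) u D z =
      r ^ (m + 1) * ∑ k ∈ Finset.range (m + 1),
        (eulerian (m + 1) k : ℂ) * (u z - a) ^ (k + 1) * (u z - b) ^ (m + 1 - k) := by
    intro m
    induction m with
    | zero =>
      intro z hz
      rw [iteratedDerivWithin_one]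
      rw [(hu z hz).hasDerivWithinAt.derivWithin (hud z hz)]
      simp [eulerian]
      ring
    | succ m ih =>
      intro z hz
      rw [iteratedDerivWithin_succ]
      have heq : derivWithin (iteratedDerivWithin (m + 1) u D) D z
          = derivWithin (fun z => r ^ (m + 1) * ∑ k ∈ Finset.range (m + 1),
              (eulerian (m + 1) k : ℂ) * (u z - a) ^ (k + 1) * (u z - b) ^ (m + 1 - k)) D z :=
        derivWithin_congr ih (ih z hz)
      rw [heq]
      have hF : HasDerivAt (fun z => r ^ (m + 1) * ∑ k ∈ Finset.range (m + 1),
            (eulerian (m + 1) k : ℂ) * (u z - a) ^ (k + 1) * (u z - b) ^ (m + 1 - k))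
          (r ^ (m + 1) * ((∑ k ∈ Finset.range (m + 1), (eulerian (m + 1) k : ℂ) *
            (((k : ℂ) + 1) * (u z - a) ^ k * (u z - b) ^ (m + 1 - k) +
              ((m + 1 - k : ℕ) : ℂ) * (u z - a) ^ (k + 1) * (u z - b) ^ (m - k)))
            * (r * (u z - a) * (u z - b)))) z := by
        exact ((G_hasDerivAt a b m (u z)).comp z (hu z hz)).const_mul (r ^ (m + 1))
      rw [hF.hasDerivWithinAt.derivWithin (hud z hz)]
      have hk := eulerian_key a b (u z) m
      calc r ^ (m + 1) * ((∑ k ∈ Finset.range (m + 1), (eulerian (m + 1) k : ℂ) *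
            (((k : ℂ) + 1) * (u z - a) ^ k * (u z - b) ^ (m + 1 - k) +
              ((m + 1 - k : ℕ) : ℂ) * (u z - a) ^ (k + 1) * (u z - b) ^ (m - k)))
            * (r * (u z - a) * (u z - b)))
          = r ^ (m + 2) * ((∑ k ∈ Finset.range (m + 1), (eulerian (m + 1) k : ℂ) *
            (((k : ℂ) + 1) * (u z - a) ^ k * (u z - b) ^ (m + 1 - k) +
              ((m + 1 - k : ℕ) : ℂ) * (u z - a) ^ (k + 1) * (u z - b) ^ (m - k)))
            * ((u z - a) * (u z - b))) := by ring
        _ = r ^ (m + 2) * ∑ k ∈ Finset.range (m + 2),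
              (eulerian (m + 2) k : ℂ) * (u z - a) ^ (k + 1) * (u z - b) ^ (m + 2 - k) := by rw [hk]
  obtain ⟨m, rfl⟩ : ∃ m, n = m + 1 := ⟨n - 1, by omega⟩
  exact main m z hz
end

section
/- If u satisfies u' = r(u−a)(u−b) and v satisfies v' = r·v·(u − (a+b)/2), then for every n ≥ 0 the n-th derivative of v equals v^(n)(z) = v(z) · (r^n / 2^n) · Σ_{k=1}^{n+1} M_{n+1,k} (u−a)^{n+1−k} (u−b)^{k−1}, where M_{n,k} are the MacMahon numbers. -/
open scoped BigOperators
open MeasureTheory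

/-- MacMahon numbers `M n k`: `M n 1 = 1`, `M n k = 0` outside `1 ≤ k ≤ n`, and
`M n k = (2k−1) M (n−1) k + (2n−2k+1) M (n−1) (k−1)`. -/
def macmahon : ℕ → ℕ → ℕ
  | 0, _ => 0
  | 1, 1 => 1
  | 1, _ => 0
  | n + 2, 0 => 0
  | n + 2, k + 1 =>
      (2 * k + 1) * macmahon (n + 1) (k + 1) +
        (2 * (n + 2) - 2 * (k + 1) + 1) * macmahon (n + 1) k

lemma macmahon_zero (n : ℕ) : macmahon n 0 = 0 := by
  match n with
  | 0 => rfl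
  | 1 => rfl
  | n+2 => rfl

lemma macmahon_gt : ∀ n k : ℕ, n < k → macmahon n k = 0 := by
  intro n
  induction n with
  | zero => intro k _; rfl
  | succ m ih =>
    intro k hk
    match m, k, hk with
    | 0, k+2, _ => rfl
    | m+1, k+1, hk =>
      have h1 : m + 1 < k + 1 := by omega
      have h2 : m + 1 < k := by omega
      show (2 * k + 1) * macmahon (m + 1) (k + 1) +
        (2 * (m + 2) - 2 * (k + 1) + 1) * macmahon (m + 1) k = 0
      rw [ih _ h1, ih _ h2]; ring

noncomputable def Sf (A B : ℂ) (n : ℕ) : ℂ :=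
  ∑ j ∈ Finset.range (n+1), (macmahon (n+1) (j+1) : ℂ) * A ^ (n - j) * B ^ j

noncomputable def Tf (A B : ℂ) (n : ℕ) : ℂ :=
  ∑ j ∈ Finset.range (n+1), (macmahon (n+1) (j+1) : ℂ) *
    (((n - j : ℕ) : ℂ) * A ^ (n - j - 1) * B ^ j + (j : ℂ) * A ^ (n - j) * B ^ (j - 1))

lemma helper (p q : ℕ) (A B : ℂ) :
    (A + B) * (A ^ p * B ^ q) + 2 * (A * B) *
      ((p : ℂ) * A ^ (p - 1) * B ^ q + (q : ℂ) * A ^ p * B ^ (q - 1)) =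
    (2 * (q : ℂ) + 1) * A ^ (p + 1) * B ^ q + (2 * (p : ℂ) + 1) * A ^ p * B ^ (q + 1) := by
  match p, q with
  | 0, 0 => push_cast; ring
  | 0, q+1 => push_cast; ring
  | p+1, 0 => push_cast; ring
  | p+1, q+1 => push_cast; ring

lemma keyid (A B : ℂ) (n : ℕ) :
    Sf A B (n+1) = (A + B) * Sf A B n + 2 * (A * B) * Tf A B n := by
  have lhs : Sf A B (n+1) =
      (∑ j ∈ Finset.range (n+2), (2 * (j:ℂ) + 1) * (macmahon (n+1) (j+1) : ℂ) * A ^ (n+1-j) * B ^ j)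
      + ∑ j ∈ Finset.range (n+2), ((2 * (n+1-j : ℕ) + 1 : ℕ) : ℂ) * (macmahon (n+1) j : ℂ) * A ^ (n+1-j) * B ^ j := by
    rw [Sf, ← Finset.sum_add_distrib]
    refine Finset.sum_congr rfl ?_
    intro j hj
    have hj' : j ≤ n + 1 := by simpa [Nat.lt_succ_iff] using Finset.mem_range.mp hj
    show (macmahon (n+2) (j+1) : ℂ) * A ^ (n+1-j) * B ^ j = _
    have : macmahon (n+2) (j+1) = (2 * j + 1) * macmahon (n + 1) (j + 1) +
        (2 * (n + 1 - j) + 1) * macmahon (n + 1) j := by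
      show (2 * j + 1) * macmahon (n + 1) (j + 1) +
          (2 * (n + 2) - 2 * (j + 1) + 1) * macmahon (n + 1) j = _
      congr 2
      omega
    rw [this]
    push_cast
    ring
  have h1 : (∑ j ∈ Finset.range (n+2), (2 * (j:ℂ) + 1) * (macmahon (n+1) (j+1) : ℂ) * A ^ (n+1-j) * B ^ j)
      = ∑ j ∈ Finset.range (n+1), (2 * (j:ℂ) + 1) * (macmahon (n+1) (j+1) : ℂ) * A ^ (n+1-j) * B ^ j := by
    rw [Finset.sum_range_succ, macmahon_gt (n+1) (n+2) (by omega)]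
    simp
  have h2 : (∑ j ∈ Finset.range (n+2), ((2 * (n+1-j : ℕ) + 1 : ℕ) : ℂ) * (macmahon (n+1) j : ℂ) * A ^ (n+1-j) * B ^ j)
      = ∑ j ∈ Finset.range (n+1), ((2 * (n+1-(j+1) : ℕ) + 1 : ℕ) : ℂ) * (macmahon (n+1) (j+1) : ℂ) * A ^ (n+1-(j+1)) * B ^ (j+1) := by
    rw [Finset.sum_range_succ' (fun j => ((2 * (n+1-j : ℕ) + 1 : ℕ) : ℂ) * (macmahon (n+1) j : ℂ) * A ^ (n+1-j) * B ^ j) (n+1),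
        macmahon_zero]
    simp
  rw [lhs, h1, h2, ← Finset.sum_add_distrib,
    Tf, Sf, Finset.mul_sum, Finset.mul_sum, ← Finset.sum_add_distrib]
  refine Finset.sum_congr rfl ?_
  intro j hj
  have hj' : j ≤ n := by simpa [Nat.lt_succ_iff] using Finset.mem_range.mp hj
  have e1 : n + 1 - j = (n - j) + 1 := by omega
  have e2 : n + 1 - (j + 1) = n - j := by omega
  rw [e1, e2]
  have e3 : (((2 * (n - j) + 1 : ℕ)) : ℂ) = 2 * ((n - j : ℕ) : ℂ) + 1 := by push_cast; ring
  rw [e3]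
  calc (2 * (j:ℂ) + 1) * (macmahon (n+1) (j+1) : ℂ) * A ^ (n - j + 1) * B ^ j
        + (2 * ((n - j : ℕ) : ℂ) + 1) * (macmahon (n+1) (j+1) : ℂ) * A ^ (n - j) * B ^ (j+1)
      = (macmahon (n+1) (j+1) : ℂ) * ((2 * ((j:ℕ) : ℂ) + 1) * A ^ ((n-j) + 1) * B ^ j
          + (2 * ((n - j : ℕ) : ℂ) + 1) * A ^ (n-j) * B ^ (j + 1)) := by ring
    _ = (macmahon (n+1) (j+1) : ℂ) * ((A + B) * (A ^ (n-j) * B ^ j) + 2 * (A * B) *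
          (((n-j : ℕ) : ℂ) * A ^ (n-j-1) * B ^ j + ((j:ℕ) : ℂ) * A ^ (n-j) * B ^ (j-1))) := by
        rw [← helper]
    _ = _ := by ring

theorem riccati_v_iterated_deriv
    (D : Set ℂ) (hD : IsOpen D) (r a b : ℂ) (hr : r ≠ 0) (hab : a ≠ b)
    (u v : ℂ → ℂ)
    (hu : ∀ z ∈ D, HasDerivAt u (r * (u z - a) * (u z - b)) z)
    (hv : ∀ z ∈ D, HasDerivAt v (r * v z * (u z - (a + b) / 2)) z)
    (n : ℕ) (z : ℂ) (hz : z ∈ D) :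
    iteratedDerivWithin n v D z =
      v z * (r ^ n / 2 ^ n) * ∑ k ∈ Finset.Icc 1 (n + 1),
        (macmahon (n + 1) k : ℂ) * (u z - a) ^ (n + 1 - k) * (u z - b) ^ (k - 1) := by
  -- rewrite Icc sum as Sf
  have hsum : ∀ m : ℕ, ∀ w : ℂ, (∑ k ∈ Finset.Icc 1 (m + 1),
        (macmahon (m + 1) k : ℂ) * (u w - a) ^ (m + 1 - k) * (u w - b) ^ (k - 1))
      = Sf (u w - a) (u w - b) m := by
    intro m w
    rw [Sf, ← Finset.Ico_add_one_right_eq_Icc, Finset.sum_Ico_eq_sum_range]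
    refine Finset.sum_congr (by norm_num) ?_
    intro j hj
    rw [show 1 + j = j + 1 from Nat.add_comm 1 j,
      show m + 1 - (j + 1) = m - j from by omega, show j + 1 - 1 = j from rfl]
  rw [hsum]
  -- main induction
  induction n generalizing z with
  | zero =>
      have hm : macmahon 1 1 = 1 := rfl
      simp only [iteratedDerivWithin_zero, Sf, pow_zero]
      norm_num [Finset.sum_range_one, hm]
  | succ m ih =>
      have hS : ∀ w ∈ D, HasDerivAt (fun x => Sf (u x - a) (u x - b) m)
          (r * ((u w - a) * (u w - b)) * Tf (u w - a) (u w - b) m) w := by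
        intro w hw
        have hA : HasDerivAt (fun x => u x - a) (r * (u w - a) * (u w - b)) w :=
          (hu w hw).sub_const a
        have hB : HasDerivAt (fun x => u x - b) (r * (u w - a) * (u w - b)) w :=
          (hu w hw).sub_const b
        have hterm : ∀ j ∈ Finset.range (m+1),
            HasDerivAt (fun x => (macmahon (m+1) (j+1) : ℂ) * (u x - a) ^ (m - j) * (u x - b) ^ j)
              ((macmahon (m+1) (j+1) : ℂ) * (((m - j : ℕ):ℂ) * (u w - a) ^ (m - j - 1) *
                  (r * (u w - a) * (u w - b))) * (u w - b) ^ j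
                + (macmahon (m+1) (j+1) : ℂ) * (u w - a) ^ (m - j) *
                  (((j : ℕ):ℂ) * (u w - b) ^ (j - 1) * (r * (u w - a) * (u w - b)))) w := by
          intro j _
          exact ((hA.pow (m - j)).const_mul ((macmahon (m+1) (j+1) : ℂ))).mul (hB.pow j)
        have := HasDerivAt.fun_sum hterm
        refine this.congr_deriv ?_
        rw [Tf, Finset.mul_sum]
        refine Finset.sum_congr rfl ?_
        intro j _
        ring
      have hg : HasDerivAt (fun x => v x * (r ^ m / 2 ^ m) * Sf (u x - a) (u x - b) m)
          (v z * (r ^ (m+1) / 2 ^ (m+1)) * Sf (u z - a) (u z - b) (m+1)) z := by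
        have h1 : HasDerivAt (fun x => (v x * (r ^ m / 2 ^ m)) * Sf (u x - a) (u x - b) m)
            ((r * v z * (u z - (a + b) / 2) * (r ^ m / 2 ^ m)) * Sf (u z - a) (u z - b) m
              + (v z * (r ^ m / 2 ^ m)) * (r * ((u z - a) * (u z - b)) * Tf (u z - a) (u z - b) m)) z :=
          ((hv z hz).mul_const _).mul (hS z hz)
        convert h1 using 1
        rw [keyid]
        field_simp
        ring
      have hstep : iteratedDerivWithin (m+1) v D z
          = derivWithin (iteratedDerivWithin m v D) D z :=
        congrFun iteratedDerivWithin_succ z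
      rw [hstep]
      have hcongr : derivWithin (iteratedDerivWithin m v D) D z
          = derivWithin (fun x => v x * (r ^ m / 2 ^ m) * Sf (u x - a) (u x - b) m) D z := by
        apply derivWithin_congr
        · intro w hw; exact ih w hw
        · exact ih z hz
      rw [hcongr]
      exact hg.hasDerivWithinAt.derivWithin (hD.uniqueDiffWithinAt hz)
end

section
/- If a holomorphic function f satisfies f' = f·(f−1) on a domain, then for every n ≥ 1, f^(n)(z) = (f(z) − 1) · Σ_{k=0}^{n−1} C(n,k) f^(k)(z). -/
open scoped BigOperators
open MeasureTheory

private lemma pascal_sum_aux (a : ℕ → ℂ) (n : ℕ) :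
    ∑ k ∈ Finset.range (n+2), ((n+2).choose k : ℂ) * a k
    = (∑ k ∈ Finset.range (n+1), ((n+1).choose k : ℂ) * a k)
      + a (n+1)
      + ∑ k ∈ Finset.range (n+1), ((n+1).choose k : ℂ) * a (k+1) := by
  rw [Finset.sum_range_succ' (fun k => ((n+2).choose k : ℂ) * a k),
    Finset.sum_range_succ' (fun k => ((n+1).choose k : ℂ) * a k),
    Finset.sum_range_succ (fun k => ((n+1).choose k : ℂ) * a (k+1))]
  have h : ∀ k, (((n+2).choose (k+1) : ℂ)) = ((n+1).choose k : ℂ) + ((n+1).choose (k+1) : ℂ) := by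
    intro k
    rw [Nat.choose_succ_succ (n+1) k]
    push_cast
    ring
  simp only [h, add_mul]
  rw [Finset.sum_add_distrib,
    Finset.sum_range_succ (fun k => ((n+1).choose k : ℂ) * a (k+1)),
    Finset.sum_range_succ (fun k => ((n+1).choose (k+1) : ℂ) * a (k+1))]
  simp only [Nat.choose_self, Nat.choose_zero_right, Nat.cast_one]
  ring

theorem logistic_ode_iterated_deriv
    (D : Set ℂ) (hD : IsOpen D) (f : ℂ → ℂ)
    (hf : ∀ z ∈ D, HasDerivAt f (f z * (f z - 1)) z)
    (n : ℕ) (hn : 1 ≤ n) (z : ℂ) (hz : z ∈ D) :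
    iteratedDerivWithin n f D z =
      (f z - 1) * ∑ k ∈ Finset.range n, (n.choose k : ℂ) * iteratedDerivWithin k f D z := by
  have hdiff : DifferentiableOn ℂ f D := fun w hw =>
    (hf w hw).differentiableAt.differentiableWithinAt
  have hcd : ContDiffOn ℂ ⊤ f D := hdiff.contDiffOn hD
  -- each iterated derivative is differentiable on D
  have hdm : ∀ m : ℕ, DifferentiableOn ℂ (iteratedDerivWithin m f D) D := by
    intro m
    exact hcd.differentiableOn_iteratedDerivWithin
      (by exact_mod_cast WithTop.coe_lt_top (m : ℕ∞)) hD.uniqueDiffOn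
  have hA : ∀ (m : ℕ) (w : ℂ), w ∈ D →
      HasDerivAt (iteratedDerivWithin m f D) (iteratedDerivWithin (m+1) f D w) w := by
    intro m w hw
    have h1 : DifferentiableAt ℂ (iteratedDerivWithin m f D) w :=
      ((hdm m) w hw).differentiableAt (hD.mem_nhds hw)
    have h2 : iteratedDerivWithin (m+1) f D w = deriv (iteratedDerivWithin m f D) w := by
      rw [iteratedDerivWithin_succ, derivWithin_of_isOpen hD hw]
    rw [h2]
    exact h1.hasDerivAt
  -- main statement by induction (shifted)
  have main : ∀ m : ℕ, ∀ w ∈ D, iteratedDerivWithin (m+1) f D w =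
      (f w - 1) * ∑ k ∈ Finset.range (m+1),
        ((m+1).choose k : ℂ) * iteratedDerivWithin k f D w := by
    intro m
    induction m with
    | zero =>
      intro w hw
      have h1 : iteratedDerivWithin 1 f D w = deriv f w := by
        rw [iteratedDerivWithin_succ, derivWithin_of_isOpen hD hw]
        simp [iteratedDerivWithin_zero]
      rw [h1, (hf w hw).deriv]
      simp [iteratedDerivWithin_zero]
      ring
    | succ m ih =>
      intro w hw
      set g : ℂ → ℂ := fun x => ∑ k ∈ Finset.range (m+1),
        ((m+1).choose k : ℂ) * iteratedDerivWithin k f D x with hg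
      set g' : ℂ := ∑ k ∈ Finset.range (m+1),
        ((m+1).choose k : ℂ) * iteratedDerivWithin (k+1) f D w with hg'
      have hgd : HasDerivAt g g' w := by
        apply HasDerivAt.fun_sum
        intro k _
        exact (hA k w hw).const_mul _
      have hF : HasDerivAt (fun x => (f x - 1) * g x)
          (f w * (f w - 1) * g w + (f w - 1) * g') w :=
        ((hf w hw).sub_const 1).mul hgd
      have heq : HasDerivAt (iteratedDerivWithin (m+1) f D)
          (f w * (f w - 1) * g w + (f w - 1) * g') w := by
        apply hF.congr_of_eventuallyEq
        filter_upwards [hD.mem_nhds hw] with x hx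
        exact ih x hx
      have h2 : iteratedDerivWithin (m+2) f D w
          = f w * (f w - 1) * g w + (f w - 1) * g' := by
        rw [iteratedDerivWithin_succ, derivWithin_of_isOpen hD hw]
        exact heq.deriv
      rw [h2]
      rw [pascal_sum_aux (fun k => iteratedDerivWithin k f D w) (m)]
      have hIH : iteratedDerivWithin (m+1) f D w = (f w - 1) * g w := ih w hw
      rw [hIH]
      show f w * (f w - 1) * g w + (f w - 1) * g'
        = (f w - 1) * (g w + (f w - 1) * g w + g')
      ring
  obtain ⟨m, rfl⟩ : ∃ m, n = m + 1 := ⟨n - 1, (Nat.succ_pred_eq_of_pos hn).symm⟩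
  exact main m z hz
end

section
/- For every n ≥ 1, the integral over [a,b] of the derivative polynomial P_n(u; a, b) = Σ_{k=0}^{n−2} ⟨n−1,k⟩ (u−a)^{k+1}(u−b)^{n−1−k} (for n ≥ 2; P_1(u) = u−a) equals −(b−a)^{n+1} B_n, where B_n is the n-th Bernoulli number. -/
open scoped BigOperators
open MeasureTheory

/-- Derivative polynomial `P_n(u;a,b) = Σ_{k=0}^{n-2} ⟨n-1,k⟩ (u-a)^(k+1) (u-b)^(n-1-k)`
for `n ≥ 2`, with `P_1(u) = u - a`. -/
noncomputable def P (n : ℕ) (a b u : ℝ) : ℝ :=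
  if n = 1 then u - a
  else ∑ k ∈ Finset.range (n - 1), (eulerian (n - 1) k : ℝ) * (u - a) ^ (k + 1) * (u - b) ^ (n - 1 - k)

open Finset Polynomial intervalIntegral

lemma eulerian_eq_zero : ∀ n k, n ≤ k → k ≠ 0 → eulerian n k = 0 := by
  intro n
  induction n with
  | zero =>
    intro k hk h0
    cases k with
    | zero => exact absurd rfl h0
    | succ j => rfl
  | succ n ih =>
    intro k hk h0
    cases k with
    | zero => exact absurd rfl h0
    | succ j =>
      have hj : n ≤ j := Nat.lt_succ_iff.mp hk
      show (j + 2) * eulerian n (j + 1) + (n - j) * eulerian n j = 0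
      rw [ih (j+1) (le_trans hj (Nat.le_succ j)) (Nat.succ_ne_zero j),
        Nat.sub_eq_zero_of_le hj]
      ring

lemma eulerian_cast (m j : ℕ) (h : j ≤ m) :
    (eulerian (m+1) (j+1) : ℚ)
      = ((j:ℚ)+2) * (eulerian m (j+1) : ℚ) + ((m:ℚ) - (j:ℚ)) * (eulerian m j : ℚ) := by
  show (((j+2) * eulerian m (j+1) + (m - j) * eulerian m j : ℕ) : ℚ) = _
  push_cast [Nat.cast_sub h]
  ring

lemma prodf_succ_left (x : ℚ) (m k : ℕ) :
    (∏ i ∈ range (m+1), (x + ((k:ℚ) + 1) - (i:ℚ)))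
      = (x + (k:ℚ) + 1) * ∏ i ∈ range m, (x + (k:ℚ) - (i:ℚ)) := by
  rw [prod_range_succ' (fun i => x + ((k:ℚ)+1) - (i:ℚ)) m]
  rw [show (∏ i ∈ range m, (x + ((k:ℚ)+1) - ((i+1:ℕ):ℚ)))
      = ∏ i ∈ range m, (x + (k:ℚ) - (i:ℚ)) from
    prod_congr rfl fun i _ => by push_cast; ring]
  push_cast
  ring

lemma worpitzky (m : ℕ) (x : ℚ) :
    (m.factorial : ℚ) * x ^ m
      = ∑ k ∈ range (m + 1), (eulerian m k : ℚ) * ∏ i ∈ range m, (x + (k:ℚ) - (i:ℚ)) := by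
  induction m with
  | zero => simp [eulerian]
  | succ m ih =>
    have key : ∀ k : ℕ,
        ((k:ℚ)+1) * (∏ i ∈ range (m+1), (x + (k:ℚ) - (i:ℚ)))
          + ((m:ℚ) - (k:ℚ)) * (∏ i ∈ range (m+1), (x + ((k:ℚ)+1) - (i:ℚ)))
        = ((m:ℚ)+1) * x * ∏ i ∈ range m, (x + (k:ℚ) - (i:ℚ)) := by
      intro k
      rw [prod_range_succ (fun i => x + (k:ℚ) - (i:ℚ)) m, prodf_succ_left]
      ring
    rw [sum_range_succ' (fun k => (eulerian (m+1) k : ℚ) * ∏ i ∈ range (m+1), (x + (k:ℚ) - (i:ℚ)))]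
    have hterm : ∀ j ∈ range (m+1),
        (eulerian (m+1) (j+1) : ℚ) * ∏ i ∈ range (m+1), (x + ((j+1:ℕ):ℚ) - (i:ℚ))
        = ((j:ℚ)+2) * (eulerian m (j+1) : ℚ) * ∏ i ∈ range (m+1), (x + ((j:ℚ)+1) - (i:ℚ))
          + ((m:ℚ) - (j:ℚ)) * (eulerian m j : ℚ) * ∏ i ∈ range (m+1), (x + ((j:ℚ)+1) - (i:ℚ)) := by
      intro j hj
      have hjm : j ≤ m := Nat.lt_succ_iff.mp (mem_range.mp hj)
      rw [show (∏ i ∈ range (m+1), (x + ((j+1:ℕ):ℚ) - (i:ℚ)))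
          = ∏ i ∈ range (m+1), (x + ((j:ℚ)+1) - (i:ℚ)) from
        prod_congr rfl fun i _ => by push_cast; ring]
      rw [eulerian_cast m j hjm]
      ring
    rw [sum_congr rfl hterm, sum_add_distrib]
    have e0 : eulerian (m+1) 0 = eulerian m 0 := rfl
    rw [e0]
    set g : ℕ → ℚ := fun k => ((k:ℚ)+1) * (eulerian m k : ℚ) * ∏ i ∈ range (m+1), (x + (k:ℚ) - (i:ℚ)) with hg
    have hA : (∑ k ∈ range (m+2), g k)
        = (∑ j ∈ range (m+1), ((j:ℚ)+2) * (eulerian m (j+1) : ℚ) * ∏ i ∈ range (m+1), (x + ((j:ℚ)+1) - (i:ℚ)))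
          + (eulerian m 0 : ℚ) * ∏ i ∈ range (m+1), (x + ((0:ℕ):ℚ) - (i:ℚ)) := by
      rw [sum_range_succ' g]
      congr 1
      · refine sum_congr rfl fun j _ => ?_
        simp only [hg]
        rw [show (∏ i ∈ range (m+1), (x + ((j+1:ℕ):ℚ) - (i:ℚ)))
            = ∏ i ∈ range (m+1), (x + ((j:ℚ)+1) - (i:ℚ)) from
          prod_congr rfl fun i _ => by push_cast; ring]
        push_cast
        ring
      · simp only [hg]
        push_cast
        ring
    have hdrop : (∑ k ∈ range (m+2), g k) = ∑ k ∈ range (m+1), g k := by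
      rw [sum_range_succ g]
      rw [show g (m+1) = 0 from by
        simp only [hg]
        rw [eulerian_eq_zero m (m+1) (Nat.le_succ m) (Nat.succ_ne_zero m)]
        push_cast; ring]
      ring
    rw [add_right_comm, ← hA, hdrop, ← sum_add_distrib]
    rw [show (∑ k ∈ range (m+1),
        (g k + ((m:ℚ) - (k:ℚ)) * (eulerian m k : ℚ) * ∏ i ∈ range (m+1), (x + ((k:ℚ)+1) - (i:ℚ))))
        = ∑ k ∈ range (m+1), (eulerian m k : ℚ) * (((m:ℚ)+1) * x * ∏ i ∈ range m, (x + (k:ℚ) - (i:ℚ))) from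
      sum_congr rfl fun k _ => by simp only [hg]; rw [← key k]; ring]
    rw [show (∑ k ∈ range (m+1), (eulerian m k : ℚ) * (((m:ℚ)+1) * x * ∏ i ∈ range m, (x + (k:ℚ) - (i:ℚ))))
        = ((m:ℚ)+1) * x * ∑ k ∈ range (m+1), (eulerian m k : ℚ) * ∏ i ∈ range m, (x + (k:ℚ) - (i:ℚ)) from by
      rw [mul_sum]; exact sum_congr rfl fun k _ => by ring]
    rw [← ih, Nat.factorial_succ]
    push_cast
    ring

noncomputable def Fpoly (m : ℕ) : Polynomial ℚ :=
  ∑ k ∈ range (m+2), C (eulerian (m+1) k : ℚ) * ∏ i ∈ range (m+2), (X + C ((k:ℚ) - (i:ℚ)))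

noncomputable def Gpoly (m : ℕ) : Polynomial ℚ :=
  ∑ i ∈ range (m+2), C (_root_.bernoulli i * ((m+2).choose i : ℚ) / ((m:ℚ)+2)) * X ^ (m+2-i)

lemma Fval (m : ℕ) (y : ℚ) :
    (Fpoly m).eval y
      = ∑ k ∈ range (m+2), (eulerian (m+1) k : ℚ) * ∏ i ∈ range (m+2), (y + (k:ℚ) - (i:ℚ)) := by
  rw [Fpoly, eval_finset_sum]
  refine sum_congr rfl fun k _ => ?_
  rw [eval_mul, eval_C, eval_prod]
  congr 1
  refine prod_congr rfl fun i _ => ?_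
  simp
  ring

lemma Ftel (m : ℕ) (y : ℚ) :
    (Fpoly m).eval (y+1)
      = (Fpoly m).eval y + ((m:ℚ)+2) * ((m+1).factorial : ℚ) * y^(m+1) := by
  rw [Fval, Fval]
  have key : ∀ k : ℕ,
      (∏ i ∈ range (m+2), (y + 1 + (k:ℚ) - (i:ℚ)))
        = (∏ i ∈ range (m+2), (y + (k:ℚ) - (i:ℚ)))
          + ((m:ℚ)+2) * ∏ i ∈ range (m+1), (y + (k:ℚ) - (i:ℚ)) := by
    intro k
    rw [prod_range_succ' (fun i => y + 1 + (k:ℚ) - (i:ℚ)) (m+1)]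
    rw [show (∏ i ∈ range (m+1), (y + 1 + (k:ℚ) - ((i+1:ℕ):ℚ)))
        = ∏ i ∈ range (m+1), (y + (k:ℚ) - (i:ℚ)) from
      prod_congr rfl fun i _ => by push_cast; ring]
    rw [prod_range_succ (fun i => y + (k:ℚ) - (i:ℚ)) (m+1)]
    push_cast
    ring
  rw [show (∑ k ∈ range (m+2), (eulerian (m+1) k : ℚ) * ∏ i ∈ range (m+2), (y + 1 + (k:ℚ) - (i:ℚ)))
      = ∑ k ∈ range (m+2), ((eulerian (m+1) k : ℚ) * ∏ i ∈ range (m+2), (y + (k:ℚ) - (i:ℚ))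
        + ((m:ℚ)+2) * ((eulerian (m+1) k : ℚ) * ∏ i ∈ range (m+1), (y + (k:ℚ) - (i:ℚ)))) from
    sum_congr rfl fun k _ => by rw [key k]; ring]
  rw [sum_add_distrib, ← mul_sum, ← worpitzky (m+1) y]
  push_cast
  ring

lemma FevalN (m N : ℕ) :
    (Fpoly m).eval (N:ℚ) = ((m+2).factorial : ℚ) * ∑ i ∈ range N, (i:ℚ)^(m+1) := by
  induction N with
  | zero =>
    rw [Fval]
    simp only [Nat.cast_zero, sum_range_zero, mul_zero]
    refine sum_eq_zero fun k hk => ?_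
    rw [Finset.prod_eq_zero (mem_range.mpr (mem_range.mp hk))]
    · ring
    · ring
  | succ N ih =>
    rw [show ((N+1:ℕ):ℚ) = (N:ℚ)+1 by push_cast; ring, Ftel, ih, sum_range_succ]
    rw [show ((m+2).factorial : ℚ) = ((m:ℚ)+2) * ((m+1).factorial : ℚ) by
      rw [Nat.factorial_succ]; push_cast; ring]
    ring

lemma GevalN (m N : ℕ) :
    (Gpoly m).eval (N:ℚ) = ∑ i ∈ range N, (i:ℚ)^(m+1) := by
  rw [sum_range_pow N (m+1), Gpoly, eval_finset_sum]
  refine sum_congr rfl fun i _ => ?_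
  rw [eval_mul, eval_C, eval_pow, eval_X]
  push_cast
  ring

lemma FG (m : ℕ) : Fpoly m = C ((m+2).factorial : ℚ) * Gpoly m := by
  have hroot : {x : ℚ | (Fpoly m - C ((m+2).factorial : ℚ) * Gpoly m).IsRoot x}.Infinite := by
    apply Set.Infinite.mono _ (Set.infinite_range_of_injective (Nat.cast_injective (R := ℚ)))
    rintro _ ⟨N, rfl⟩
    show (Fpoly m - C ((m+2).factorial : ℚ) * Gpoly m).IsRoot (N:ℚ)
    simp only [IsRoot, eval_sub, eval_mul, eval_C, FevalN, GevalN]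
    ring
  have := Polynomial.eq_zero_of_infinite_isRoot _ hroot
  exact sub_eq_zero.mp this

lemma coeff1_psi (m k : ℕ) (hk : k < m+2) :
    (∏ i ∈ range (m+2), (X + C ((k:ℚ) - (i:ℚ)))).coeff 1
      = ∏ i ∈ (range (m+2)).erase k, ((k:ℚ) - (i:ℚ)) := by
  rw [← Finset.mul_prod_erase (range (m+2)) (fun i => X + C ((k:ℚ) - (i:ℚ))) (mem_range.mpr hk)]
  rw [show (X + C ((k:ℚ) - (k:ℚ))) = X by simp]
  rw [Polynomial.coeff_X_mul, Polynomial.coeff_zero_eq_eval_zero, eval_prod]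
  refine prod_congr rfl fun i _ => by simp

lemma prod_erase_val (m k : ℕ) (hk : k < m+2) :
    ∏ i ∈ (range (m+2)).erase k, ((k:ℚ) - (i:ℚ))
      = (-1)^(m+1-k) * (k.factorial : ℚ) * ((m+1-k).factorial : ℚ) := by
  have hset : (range (m+2)).erase k = (range k) ∪ (Ico (k+1) (m+2)) := by
    ext i
    simp only [mem_erase, mem_range, mem_union, mem_Ico]
    omega
  have hdisj : Disjoint (range k) (Ico (k+1) (m+2)) := by
    rw [Finset.disjoint_left]
    intro i hi hI
    simp only [mem_range] at hi
    simp only [mem_Ico] at hI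
    omega
  rw [hset, prod_union hdisj]
  have h1 : (∏ i ∈ range k, ((k:ℚ) - (i:ℚ))) = (k.factorial : ℚ) := by
    rw [← prod_range_reflect (fun i => (k:ℚ) - (i:ℚ)) k]
    rw [show (∏ j ∈ range k, ((k:ℚ) - ((k - 1 - j:ℕ):ℚ))) = ∏ j ∈ range k, ((j:ℚ) + 1) from
      prod_congr rfl fun j hj => by
        have hjk : j < k := mem_range.mp hj
        have : ((k - 1 - j : ℕ):ℚ) = (k:ℚ) - 1 - (j:ℚ) := by
          have h2 : k - 1 - j = k - (1 + j) := by omega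
          rw [h2, Nat.cast_sub (by omega)]
          push_cast
          ring
        rw [this]
        ring]
    exact_mod_cast congrArg (Nat.cast (R := ℚ)) (Finset.prod_range_add_one_eq_factorial k)
  have h2 : (∏ i ∈ Ico (k+1) (m+2), ((k:ℚ) - (i:ℚ)))
      = (-1)^(m+1-k) * ((m+1-k).factorial : ℚ) := by
    rw [prod_Ico_eq_prod_range]
    have hc : m + 2 - (k+1) = m + 1 - k := by omega
    rw [hc]
    rw [show (∏ j ∈ range (m+1-k), ((k:ℚ) - ((k+1+j:ℕ):ℚ)))
        = ∏ j ∈ range (m+1-k), ((-1) * ((j:ℚ) + 1)) from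
      prod_congr rfl fun j _ => by push_cast; ring]
    rw [prod_mul_distrib, prod_const, card_range]
    congr 1
    exact_mod_cast congrArg (Nat.cast (R := ℚ)) (Finset.prod_range_add_one_eq_factorial (m+1-k))
  rw [h1, h2]
  ring

lemma idC (m : ℕ) :
    ∑ k ∈ range (m+2), (eulerian (m+1) k : ℚ)
        * ((-1)^(m+1-k) * (k.factorial : ℚ) * ((m+1-k).factorial : ℚ))
      = ((m+2).factorial : ℚ) * _root_.bernoulli (m+1) := by
  have hF : (Fpoly m).coeff 1
      = ∑ k ∈ range (m+2), (eulerian (m+1) k : ℚ)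
        * ((-1)^(m+1-k) * (k.factorial : ℚ) * ((m+1-k).factorial : ℚ)) := by
    rw [Fpoly, Polynomial.finset_sum_coeff]
    refine sum_congr rfl fun k hk => ?_
    rw [Polynomial.coeff_C_mul, coeff1_psi m k (mem_range.mp hk),
      prod_erase_val m k (mem_range.mp hk)]
  have hG : (Gpoly m).coeff 1 = _root_.bernoulli (m+1) := by
    rw [Gpoly, Polynomial.finset_sum_coeff]
    rw [Finset.sum_eq_single_of_mem (m+1) (mem_range.mpr (by omega))]
    · rw [Polynomial.coeff_C_mul, show m + 2 - (m+1) = 1 from by omega,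
        Polynomial.coeff_X_pow, if_pos rfl, Nat.choose_succ_self_right]
      have : ((m:ℚ) + 2) ≠ 0 := by positivity
      push_cast
      field_simp
      ring
    · intro i hi hne
      rw [Polynomial.coeff_C_mul, Polynomial.coeff_X_pow, if_neg (by
        have := mem_range.mp hi
        omega), mul_zero]
  have := congrArg (fun p => Polynomial.coeff p 1) (FG m)
  simp only [Polynomial.coeff_C_mul] at this
  rw [hF, hG] at this
  rw [this]

lemma eulerian_zero (m : ℕ) : eulerian (m+1) 0 = eulerian m 0 := by rw [eulerian]

lemma idB (m : ℕ) (hm : 1 ≤ m) :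
    ∑ k ∈ range m, (eulerian m k : ℚ)
        * ((-1)^(m-k) * ((k+1).factorial : ℚ) * ((m-k).factorial : ℚ))
      = -(((m+2).factorial : ℚ) * _root_.bernoulli (m+1)) := by
  have hC := idC m
  rw [sum_range_succ' (fun k => (eulerian (m+1) k : ℚ)
      * ((-1)^(m+1-k) * (k.factorial : ℚ) * ((m+1-k).factorial : ℚ)))] at hC
  -- transform each shifted term
  have hterm : ∀ j ∈ range (m+1),
      (eulerian (m+1) (j+1) : ℚ)
          * ((-1)^(m+1-(j+1)) * ((j+1).factorial : ℚ) * ((m+1-(j+1)).factorial : ℚ))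
      = (eulerian m (j+1) : ℚ) * ((-1)^(m-j) * ((j+2).factorial : ℚ) * ((m-j).factorial : ℚ))
        + ((m:ℚ) - (j:ℚ)) * ((eulerian m j : ℚ)
            * ((-1)^(m-j) * ((j+1).factorial : ℚ) * ((m-j).factorial : ℚ))) := by
    intro j hj
    have hjm : j ≤ m := Nat.lt_succ_iff.mp (mem_range.mp hj)
    rw [eulerian_cast m j hjm, show m+1-(j+1) = m-j from by omega,
      show (j+2).factorial = (j+2) * (j+1).factorial from Nat.factorial_succ (j+1)]
    push_cast
    ring
  rw [sum_congr rfl hterm, sum_add_distrib] at hC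
  -- recombine first part with the k = 0 leftover
  set G : ℕ → ℚ := fun k => (eulerian m k : ℚ)
      * ((-1)^(m+1-k) * ((k+1).factorial : ℚ) * ((m+1-k).factorial : ℚ)) with hG
  have hA : (∑ k ∈ range (m+2), G k)
      = (∑ j ∈ range (m+1), (eulerian m (j+1) : ℚ)
          * ((-1)^(m-j) * ((j+2).factorial : ℚ) * ((m-j).factorial : ℚ)))
        + (eulerian (m+1) 0 : ℚ)
          * ((-1)^(m+1-0) * ((0:ℕ).factorial : ℚ) * ((m+1-0).factorial : ℚ)) := by
    rw [sum_range_succ' G]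
    congr 1
    · refine sum_congr rfl fun j hj => ?_
      simp only [hG]
      rw [show m+1-(j+1) = m-j from by omega]
  rw [add_right_comm, ← hA] at hC
  have hdrop : (∑ k ∈ range (m+2), G k) = ∑ k ∈ range m, G k := by
    simp only [hG]
    rw [sum_range_succ, sum_range_succ,
      show eulerian m (m+1) = 0 from eulerian_eq_zero m (m+1) (by omega) (by omega),
      show eulerian m m = 0 from eulerian_eq_zero m m le_rfl (by omega)]
    push_cast
    ring
  rw [hdrop] at hC
  have hdrop2 : (∑ j ∈ range (m+1), ((m:ℚ) - (j:ℚ)) * ((eulerian m j : ℚ)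
          * ((-1)^(m-j) * ((j+1).factorial : ℚ) * ((m-j).factorial : ℚ))))
      = ∑ j ∈ range m, ((m:ℚ) - (j:ℚ)) * ((eulerian m j : ℚ)
          * ((-1)^(m-j) * ((j+1).factorial : ℚ) * ((m-j).factorial : ℚ))) := by
    rw [sum_range_succ]
    simp
  rw [hdrop2, ← sum_add_distrib] at hC
  have hcomb : ∀ k ∈ range m,
      (G k + ((m:ℚ) - (k:ℚ)) * ((eulerian m k : ℚ)
          * ((-1)^(m-k) * ((k+1).factorial : ℚ) * ((m-k).factorial : ℚ))))
      = -((eulerian m k : ℚ) * ((-1)^(m-k) * ((k+1).factorial : ℚ) * ((m-k).factorial : ℚ))) := by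
    intro k hk
    have hkm : k < m := mem_range.mp hk
    simp only [hG]
    rw [show m+1-k = (m-k)+1 from by omega,
      show ((m-k)+1).factorial = ((m-k)+1) * (m-k).factorial from Nat.factorial_succ (m-k),
      pow_succ]
    have hcast : ((m-k:ℕ):ℚ) = (m:ℚ) - (k:ℚ) := by
      rw [Nat.cast_sub (le_of_lt hkm)]
    push_cast [hcast]
    ring
  rw [sum_congr rfl hcomb, sum_neg_distrib] at hC
  linarith [hC]

lemma sumS (q : ℕ) : ∀ p : ℕ,
    ∑ i ∈ range (q+1), (-1:ℝ)^i * (q.choose i : ℝ) / ((p:ℝ) + (i:ℝ) + 1)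
      = ((p.factorial : ℝ) * (q.factorial : ℝ)) / ((p+q+1).factorial : ℝ) := by
  induction q with
  | zero =>
    intro p
    have h1 : ((p+1).factorial : ℝ) = ((p:ℝ)+1) * (p.factorial : ℝ) := by
      rw [Nat.factorial_succ]; push_cast; ring
    have h2 : ((p:ℝ)+1) ≠ 0 := by positivity
    have h3 : (p.factorial : ℝ) ≠ 0 := by
      exact_mod_cast Nat.cast_ne_zero.mpr p.factorial_ne_zero
    simp only [zero_add, sum_range_one]
    rw [show p + 0 + 1 = p + 1 from rfl, h1]
    push_cast
    field_simp
    simp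
  | succ q ih =>
    intro p
    have hsplit : ∀ j : ℕ, ((q+1).choose (j+1) : ℝ) = (q.choose j : ℝ) + (q.choose (j+1) : ℝ) := by
      intro j
      exact_mod_cast congrArg (Nat.cast (R := ℝ)) (Nat.choose_succ_succ q j)
    rw [sum_range_succ' (fun i => (-1:ℝ)^i * ((q+1).choose i : ℝ) / ((p:ℝ) + (i:ℝ) + 1))]
    have hterm : ∀ j ∈ range (q+1),
        (-1:ℝ)^(j+1) * ((q+1).choose (j+1) : ℝ) / ((p:ℝ) + ((j+1:ℕ):ℝ) + 1)
        = -((-1:ℝ)^j * (q.choose j : ℝ) / (((p+1:ℕ):ℝ) + (j:ℝ) + 1))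
          + (-1:ℝ)^(j+1) * (q.choose (j+1) : ℝ) / ((p:ℝ) + ((j+1:ℕ):ℝ) + 1) := by
      intro j hj
      rw [hsplit j]
      push_cast
      ring
    rw [sum_congr rfl hterm, sum_add_distrib]
    -- second piece: shifted tail of S(p,q)
    have htail : (∑ j ∈ range (q+1), (-1:ℝ)^(j+1) * (q.choose (j+1) : ℝ) / ((p:ℝ) + ((j+1:ℕ):ℝ) + 1))
        = (∑ i ∈ range (q+1), (-1:ℝ)^i * (q.choose i : ℝ) / ((p:ℝ) + (i:ℝ) + 1))
          - (-1:ℝ)^0 * (q.choose 0 : ℝ) / ((p:ℝ) + ((0:ℕ):ℝ) + 1) := by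
      have h := sum_range_succ' (fun i => (-1:ℝ)^i * (q.choose i : ℝ) / ((p:ℝ) + (i:ℝ) + 1)) (q+1)
      have h2 := sum_range_succ (fun i => (-1:ℝ)^i * (q.choose i : ℝ) / ((p:ℝ) + (i:ℝ) + 1)) (q+1)
      rw [Nat.choose_succ_self] at h2
      simp only [Nat.cast_zero, mul_zero, zero_mul, zero_div, mul_zero] at h2
      rw [h2, add_zero] at h
      linarith [h]
    rw [htail, ih p]
    -- first piece: -S(p+1,q), rewrite to match ih (p+1)
    have hfirst : (∑ j ∈ range (q+1), -((-1:ℝ)^j * (q.choose j : ℝ) / (((p+1:ℕ):ℝ) + (j:ℝ) + 1)))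
        = -(((p+1).factorial : ℝ) * (q.factorial : ℝ)) / (((p+1)+q+1).factorial : ℝ) := by
      rw [sum_neg_distrib, ih (p+1)]
      ring
    rw [hfirst]
    -- now pure arithmetic
    have e1 : (p+1)+q+1 = (p+q+1)+1 := by omega
    have e2 : p+(q+1)+1 = (p+q+1)+1 := by omega
    rw [e1, e2]
    have hf1 : (((p+q+1)+1).factorial : ℝ) = (((p+q+1):ℝ)+1) * ((p+q+1).factorial : ℝ) := by
      rw [Nat.factorial_succ]; push_cast; ring
    have hf2 : ((q+1).factorial : ℝ) = ((q:ℝ)+1) * (q.factorial : ℝ) := by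
      rw [Nat.factorial_succ]; push_cast; ring
    have hf3 : ((p+1).factorial : ℝ) = ((p:ℝ)+1) * (p.factorial : ℝ) := by
      rw [Nat.factorial_succ]; push_cast; ring
    rw [hf1, hf2, hf3]
    have n1 : ((p+q+1:ℕ):ℝ) + 1 ≠ 0 := by positivity
    have n2 : ((p+q+1).factorial : ℝ) ≠ 0 := by
      exact_mod_cast Nat.cast_ne_zero.mpr (p+q+1).factorial_ne_zero
    have n3 : ((p:ℝ)+1) ≠ 0 := by positivity
    field_simp
    push_cast
    simp only [Nat.choose_zero_right, Nat.cast_one]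
    ring

lemma integral_sub_pow (a b : ℝ) (n : ℕ) :
    ∫ u in a..b, (u - a)^n = (b-a)^(n+1)/((n:ℝ)+1) := by
  rw [show (fun u => (u - a)^n) = (fun u => ((fun x => x^n) (u - a))) from rfl]
  rw [intervalIntegral.integral_comp_sub_right (fun x => x^n) a, integral_pow]
  rw [sub_self, zero_pow (Nat.succ_ne_zero n), sub_zero]

lemma integral_beta (a b : ℝ) (p q : ℕ) :
    ∫ u in a..b, (u-a)^p * (u-b)^q
      = (-1)^q * ((p.factorial : ℝ) * (q.factorial : ℝ) / ((p+q+1).factorial : ℝ))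
          * (b-a)^(p+q+1) := by
  have hexp : ∀ u : ℝ, (u-a)^p * (u-b)^q
      = ∑ i ∈ range (q+1), (q.choose i : ℝ) * (a-b)^(q-i) * (u-a)^(p+i) := by
    intro u
    rw [show u - b = (u - a) + (a - b) from by ring, add_pow, mul_sum]
    refine sum_congr rfl fun i _ => ?_
    rw [pow_add]
    ring
  rw [intervalIntegral.integral_congr (g := fun u => ∑ i ∈ range (q+1),
      (q.choose i : ℝ) * (a-b)^(q-i) * (u-a)^(p+i)) (fun u _ => hexp u)]
  rw [intervalIntegral.integral_finset_sum (fun i _ => (Continuous.intervalIntegrable (by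
    exact (continuous_const.mul ((continuous_id.sub continuous_const).pow (p+i)))) a b))]
  have hterm : ∀ i ∈ range (q+1),
      (∫ u in a..b, (q.choose i : ℝ) * (a-b)^(q-i) * (u-a)^(p+i))
      = ((-1:ℝ)^i * (q.choose i : ℝ) / ((p:ℝ) + (i:ℝ) + 1))
          * ((-1)^q * (b-a)^(p+q+1)) := by
    intro i hi
    have hiq : i ≤ q := Nat.lt_succ_iff.mp (mem_range.mp hi)
    rw [intervalIntegral.integral_const_mul, integral_sub_pow]
    have h1 : (a-b)^(q-i) = (-1:ℝ)^(q-i) * (b-a)^(q-i) := by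
      rw [show a - b = -(b-a) from by ring, neg_pow]
    have h2 : (-1:ℝ)^(q-i) = (-1:ℝ)^q * (-1:ℝ)^i := by
      have he : (q - i) + i = q := by omega
      have hsq : (-1:ℝ)^i * (-1:ℝ)^i = 1 := by
        rw [← pow_add]
        exact Even.neg_one_pow ⟨i, rfl⟩
      calc (-1:ℝ)^(q-i) = (-1:ℝ)^(q-i) * ((-1:ℝ)^i * (-1:ℝ)^i) := by rw [hsq, mul_one]
        _ = ((-1:ℝ)^(q-i) * (-1:ℝ)^i) * (-1:ℝ)^i := by ring
        _ = (-1:ℝ)^q * (-1:ℝ)^i := by rw [← pow_add, he]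
    have h3 : (b-a)^(q-i) * (b-a)^(p+i+1) = (b-a)^(p+q+1) := by
      rw [← pow_add]
      congr 1
      omega
    rw [h1, h2]
    push_cast
    field_simp
    rw [← h3]
    ring
  rw [sum_congr rfl hterm, ← sum_mul, sumS q p]
  ring

theorem integral_P_eq_bernoulli (n : ℕ) (hn : 1 ≤ n) (a b : ℝ) :
    ∫ u in a..b, P n a b u = -(b - a) ^ (n + 1) * (bernoulli n : ℝ) := by
  match n, hn with
  | 1, _ =>
    have h1 : ∀ u : ℝ, P 1 a b u = (u - a)^1 := fun u => by simp [P]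
    rw [intervalIntegral.integral_congr (fun u _ => h1 u), integral_sub_pow, _root_.bernoulli_one]
    push_cast
    ring
  | (M + 2), _ =>
    set m := M + 1 with hmdef
    have hm : 1 ≤ m := by omega
    have hP : ∀ u : ℝ, P (m+1) a b u
        = ∑ k ∈ range m, (eulerian m k : ℝ) * ((u-a)^(k+1) * (u-b)^(m-k)) := by
      intro u
      rw [P, if_neg (by omega)]
      simp only [Nat.add_sub_cancel]
      exact sum_congr rfl fun k _ => by ring
    rw [show M + 2 = m + 1 from rfl]
    rw [intervalIntegral.integral_congr (fun u _ => hP u)]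
    rw [intervalIntegral.integral_finset_sum (fun k _ =>
      ((by fun_prop : Continuous fun u : ℝ =>
        (eulerian m k : ℝ) * ((u-a)^(k+1) * (u-b)^(m-k))).intervalIntegrable a b))]
    have hterm : ∀ k ∈ range m,
        (∫ u in a..b, (eulerian m k : ℝ) * ((u-a)^(k+1) * (u-b)^(m-k)))
        = ((eulerian m k : ℝ) * ((-1)^(m-k) * ((k+1).factorial : ℝ) * ((m-k).factorial : ℝ)))
            * ((b-a)^(m+2) / ((m+2).factorial : ℝ)) := by
      intro k hk
      have hkm : k < m := mem_range.mp hk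
      rw [intervalIntegral.integral_const_mul, integral_beta]
      rw [show (k+1)+(m-k)+1 = m+2 from by omega]
      ring
    rw [sum_congr rfl hterm, ← sum_mul]
    have hB := congrArg (Rat.cast (K := ℝ)) (idB m hm)
    push_cast at hB
    rw [hB]
    have hne : ((m+2).factorial : ℝ) ≠ 0 := by
      exact_mod_cast Nat.cast_ne_zero.mpr (m+2).factorial_ne_zero
    field_simp
end
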